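/- Let (I, f_{1,∞}) be an m-periodic non-autonomous system on the closed unit interval I = [0,1]. If (I, f_{1,∞}) is sensitive, then it is syndetically sensitive: there exists δ > 0 such that for every non-empty open U ⊆ I, the set N(U, δ) = {n : ∃ x, y ∈ U, |f_1^n(x) − f_1^n(y)| > δ} is syndetic (has bounded gaps). -/

import Mathlib

open Set Filter MeasureTheory TopologicalSpace

/-- `iterN f n = f_{n-1} ∘ ⋯ ∘ f_0`, the `n`-th iterate of the non-autonomous system. -/
def iterN {X : Type*} (f : ℕ → X → X) : ℕ → X → X
  | 0 => id
  | n + 1 => f n ∘ iterN f n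

/-- Topological transitivity of a non-autonomous system. -/
def NATransitive {X : Type*} [TopologicalSpace X] (f : ℕ → X → X) : Prop :=
  ∀ U V : Set X, IsOpen U → IsOpen V → U.Nonempty → V.Nonempty →
    ∃ n : ℕ, 0 < n ∧ (iterN f n '' U ∩ V).Nonempty

/-- Weak mixing (order 2). -/
def NAWeaklyMixing {X : Type*} [TopologicalSpace X] (f : ℕ → X → X) : Prop :=
  ∀ U₁ U₂ V₁ V₂ : Set X, IsOpen U₁ → IsOpen U₂ → IsOpen V₁ → IsOpen V₂ →
    U₁.Nonempty → U₂.Nonempty → V₁.Nonempty → V₂.Nonempty →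
    ∃ n : ℕ, 0 < n ∧ (iterN f n '' U₁ ∩ V₁).Nonempty ∧ (iterN f n '' U₂ ∩ V₂).Nonempty

/-- Weak mixing of order `m`. -/
def NAWeaklyMixingOrder {X : Type*} [TopologicalSpace X] (f : ℕ → X → X) (m : ℕ) : Prop :=
  ∀ U V : Fin m → Set X, (∀ i, IsOpen (U i)) → (∀ i, IsOpen (V i)) →
    (∀ i, (U i).Nonempty) → (∀ i, (V i).Nonempty) →
    ∃ n : ℕ, 0 < n ∧ ∀ i, (iterN f n '' U i ∩ V i).Nonempty

/-- Banks's condition. -/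
def NABanks {X : Type*} [TopologicalSpace X] (f : ℕ → X → X) : Prop :=
  ∀ U V W : Set X, IsOpen U → IsOpen V → IsOpen W →
    U.Nonempty → V.Nonempty → W.Nonempty →
    ∃ n : ℕ, 0 < n ∧ (iterN f n '' U ∩ V).Nonempty ∧ (iterN f n '' U ∩ W).Nonempty

/-- Topological mixing. -/
def NAMixing {X : Type*} [TopologicalSpace X] (f : ℕ → X → X) : Prop :=
  ∀ U V : Set X, IsOpen U → IsOpen V → U.Nonempty → V.Nonempty →
    ∃ N : ℕ, ∀ n ≥ N, (iterN f n '' U ∩ V).Nonempty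

/-- `blockC f s k = f_{s+k-1} ∘ ⋯ ∘ f_s`. -/
def blockC {X : Type*} (f : ℕ → X → X) (s k : ℕ) : X → X :=
  iterN (fun i => f (s + i)) k

/-- The `k`-th iterate system `f_{1,∞}^{[k]}`. -/
def kthSys {X : Type*} (f : ℕ → X → X) (k : ℕ) : ℕ → X → X :=
  fun n => blockC f (n * k) k

/-- The induced non-autonomous system on Borel probability measures (pushforwards). -/
noncomputable def inducedM {X : Type*} [MeasurableSpace X] [TopologicalSpace X]
    [BorelSpace X] (f : ℕ → X → X) (hf : ∀ n, Continuous (f n)) :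
    ℕ → ProbabilityMeasure X → ProbabilityMeasure X :=
  fun n μ => μ.map ((hf n).measurable.aemeasurable)

/-- The induced non-autonomous system on the hyperspace of non-empty compact subsets. -/
def inducedK {X : Type*} [TopologicalSpace X] (f : ℕ → X → X) (hf : ∀ n, Continuous (f n)) :
    ℕ → NonemptyCompacts X → NonemptyCompacts X :=
  fun n K => ⟨⟨f n '' (K : Set X), K.isCompact.image (hf n)⟩, K.nonempty.image _⟩

/-- The set `N(U, δ)` of sensitivity times. -/
def NSet {X : Type*} [PseudoMetricSpace X] (f : ℕ → X → X) (U : Set X) (δ : ℝ) : Set ℕ :=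
  {n | 0 < n ∧ ∃ x ∈ U, ∃ y ∈ U, δ < dist (iterN f n x) (iterN f n y)}

/-- Sensitive dependence on initial conditions. -/
def NASensitive {X : Type*} [PseudoMetricSpace X] (f : ℕ → X → X) : Prop :=
  ∃ δ : ℝ, 0 < δ ∧ ∀ x : X, ∀ U : Set X, IsOpen U → x ∈ U →
    ∃ y ∈ U, ∃ n : ℕ, 0 < n ∧ δ < dist (iterN f n x) (iterN f n y)

/-- A thick subset of ℕ. -/
def ThickSet (S : Set ℕ) : Prop := ∀ p : ℕ, ∃ n : ℕ, ∀ j ≤ p, n + j ∈ S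

/-- A syndetic subset of ℕ. -/
def SyndeticSet (S : Set ℕ) : Prop := ∃ a : ℕ, ∀ i : ℕ, ∃ j, i ≤ j ∧ j ≤ i + a ∧ j ∈ S

/-- Upper density of a subset of ℕ. -/
noncomputable def upperDens (S : Set ℕ) : ℝ :=
  Filter.limsup (fun n : ℕ => (Nat.card ↥(S ∩ Set.Iio n) : ℝ) / n) Filter.atTop

/-- Periodic point of a non-autonomous system. -/
def NAPeriodicPt {X : Type*} (f : ℕ → X → X) (x : X) : Prop :=
  ∃ n : ℕ, 0 < n ∧ ∀ k : ℕ, 0 < k → iterN f (n * k) x = x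

section AuxIter

variable {X : Type*}

lemma aux_iterN_cont [TopologicalSpace X] (f : ℕ → X → X)
    (hf : ∀ n, Continuous (f n)) : ∀ n, Continuous (iterN f n) := by
  intro n
  induction n with
  | zero => exact continuous_id
  | succ n ih => exact (hf n).comp ih

lemma aux_per (f : ℕ → X → X) (m : ℕ) (hper : ∀ n, f (n + m) = f n) :
    ∀ q i, f (m * q + i) = f i := by
  intro q
  induction q with
  | zero => simp
  | succ q ih =>
    intro i
    have h1 : m * (q + 1) + i = (m * q + i) + m := by ring
    rw [h1, hper, ih]

lemma aux_iterN_add (f : ℕ → X → X) (m : ℕ) (hper : ∀ n, f (n + m) = f n)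
    (q : ℕ) : ∀ b x, iterN f (m * q + b) x = iterN f b (iterN f (m * q) x) := by
  intro b
  induction b with
  | zero => intro x; rfl
  | succ b ih =>
    intro x
    show f (m * q + b) (iterN f (m * q + b) x) = f b (iterN f b (iterN f (m * q) x))
    rw [aux_per f m hper q b, ih]

lemma aux_iterN_mul (f : ℕ → X → X) (m : ℕ) (hper : ∀ n, f (n + m) = f n) :
    ∀ t x, iterN f (m * t) x = (iterN f m)^[t] x := by
  intro t
  induction t with
  | zero => intro x; simp [iterN]
  | succ t ih =>
    intro x
    have h1 : m * (t + 1) = m * t + m := by ring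
    rw [h1, aux_iterN_add f m hper t m x, ih, Function.iterate_succ_apply']

end AuxIter

lemma aux_modulus (f : ℕ → unitInterval → unitInterval) (hf : ∀ n, Continuous (f n))
    (δ : ℝ) (hδ : 0 < δ) (m : ℕ) :
    ∃ ε : ℝ, 0 < ε ∧ ∀ r < m, ∀ a b : unitInterval, dist a b ≤ ε →
      dist (iterN f r a) (iterN f r b) ≤ δ := by
  induction m with
  | zero => exact ⟨δ, hδ, fun r hr => absurd hr (Nat.not_lt_zero r)⟩
  | succ m ih =>
    obtain ⟨ε₁, hε₁, h1⟩ := ih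
    obtain ⟨ε₂, hε₂, h2⟩ := Metric.uniformContinuous_iff.mp
      (CompactSpace.uniformContinuous_of_continuous (aux_iterN_cont f hf m)) δ hδ
    refine ⟨min ε₁ (ε₂ / 2), by positivity, ?_⟩
    intro r hr a b hab
    rcases Nat.lt_succ_iff_lt_or_eq.mp hr with hlt | heq
    · exact h1 r hlt a b (hab.trans (min_le_left _ _))
    · subst heq
      exact le_of_lt (h2 (lt_of_le_of_lt (hab.trans (min_le_right _ _)) (by linarith)))

lemma aux_g_sens (f : ℕ → unitInterval → unitInterval) (hf : ∀ n, Continuous (f n))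
    (m : ℕ) (hm : 0 < m) (hper : ∀ n, f (n + m) = f n) (h : NASensitive f) :
    ∃ ε : ℝ, 0 < ε ∧ ∀ x : unitInterval, ∀ U : Set unitInterval, IsOpen U → x ∈ U →
      ∃ y ∈ U, ∃ q : ℕ, 0 < q ∧ ε < dist ((iterN f m)^[q] x) ((iterN f m)^[q] y) := by
  obtain ⟨δ, hδ, hs⟩ := h
  obtain ⟨ε, hε, hmod⟩ := aux_modulus f hf δ hδ m
  refine ⟨ε, hε, ?_⟩
  intro x U hU hxU
  obtain ⟨y, hy, n, hn, hd⟩ := hs x (U ∩ Metric.ball x ε) (hU.inter Metric.isOpen_ball)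
    ⟨hxU, Metric.mem_ball_self hε⟩
  obtain ⟨q, r, hrm, rfl⟩ : ∃ q r : ℕ, r < m ∧ n = m * q + r :=
    ⟨n / m, n % m, Nat.mod_lt n hm, (Nat.div_add_mod n m).symm⟩
  have hiter : ∀ z, iterN f (m * q + r) z = iterN f r ((iterN f m)^[q] z) := by
    intro z
    rw [aux_iterN_add f m hper q r z, aux_iterN_mul f m hper q z]
  have hgt : ε < dist ((iterN f m)^[q] x) ((iterN f m)^[q] y) := by
    by_contra hle
    push_neg at hle
    have hcon := hmod r hrm _ _ hle
    rw [← hiter x, ← hiter y] at hcon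
    linarith
  have hq : 0 < q := by
    rcases Nat.eq_zero_or_pos q with h0 | h0
    · exfalso
      rw [h0] at hgt
      simp only [Function.iterate_zero, id_eq] at hgt
      have hxy : dist x y < ε := by
        have := hy.2
        rwa [Metric.mem_ball, dist_comm] at this
      linarith
    · exact h0
  exact ⟨y, hy.1, q, hq, hgt⟩
/-! ### The interval machine for the autonomous map `g` -/

def mcell (ε : ℝ) (j : ℕ) : Set unitInterval :=
  Subtype.val ⁻¹' Set.Icc ((j : ℝ) * ε / 8) ((j : ℝ) * ε / 8 + ε / 8)

def mint (ε : ℝ) (j : ℕ) : Set unitInterval :=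
  Subtype.val ⁻¹' Set.Ioo ((j : ℝ) * ε / 8) ((j : ℝ) * ε / 8 + ε / 8)

def mvalid (ε : ℝ) (j : ℕ) : Prop := (j : ℝ) * ε / 8 + ε / 8 ≤ 1

lemma mint_subset_mcell (ε : ℝ) (j : ℕ) : mint ε j ⊆ mcell ε j :=
  Set.preimage_mono Set.Ioo_subset_Icc_self

lemma mint_open (ε : ℝ) (j : ℕ) : IsOpen (mint ε j) :=
  isOpen_Ioo.preimage continuous_subtype_val

lemma mint_nonempty (ε : ℝ) (hε : 0 < ε) (j : ℕ) (hv : mvalid ε j) :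
    (mint ε j).Nonempty := by
  have hv' : (j : ℝ) * ε / 8 + ε / 8 ≤ 1 := hv
  have h0 : (0 : ℝ) ≤ (j : ℝ) * ε / 8 := by positivity
  refine ⟨⟨(j : ℝ) * ε / 8 + ε / 16, ⟨by linarith, by linarith⟩⟩, ?_⟩
  show ((j : ℝ) * ε / 8 + ε / 16) ∈ Set.Ioo _ _
  exact ⟨by linarith, by linarith⟩

lemma mint_preconn (ε : ℝ) (hε : 0 < ε) (j : ℕ) (hv : mvalid ε j) :
    IsPreconnected (mint ε j) := by
  have hv' : (j : ℝ) * ε / 8 + ε / 8 ≤ 1 := hv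
  have h0 : (0 : ℝ) ≤ (j : ℝ) * ε / 8 := by positivity
  rw [← Topology.IsInducing.subtypeVal.isPreconnected_image]
  have himg : Subtype.val '' (mint ε j)
      = Set.Ioo ((j : ℝ) * ε / 8) ((j : ℝ) * ε / 8 + ε / 8) := by
    rw [mint, Subtype.image_preimage_coe]
    apply Set.inter_eq_right.mpr
    intro z hz
    exact ⟨le_of_lt (lt_of_le_of_lt h0 hz.1), le_of_lt (lt_of_lt_of_le hz.2 hv')⟩
  rw [himg]
  exact isPreconnected_Ioo

lemma mvalid_le (ε : ℝ) (hε : 0 < ε) (j : ℕ) (hv : mvalid ε j) : j ≤ ⌈(8 : ℝ) / ε⌉₊ := by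
  have hv' : (j : ℝ) * ε / 8 + ε / 8 ≤ 1 := hv
  have h1 : (j : ℝ) ≤ 8 / ε := by
    rw [le_div_iff₀ hε]
    linarith
  have h2 : (j : ℝ) ≤ (⌈(8 : ℝ) / ε⌉₊ : ℝ) := h1.trans (Nat.le_ceil _)
  exact_mod_cast h2

lemma mkey (g : unitInterval → unitInterval) (hg : Continuous g) (ε : ℝ) (hε : 0 < ε)
    (hsen : ∀ x : unitInterval, ∀ U : Set unitInterval, IsOpen U → x ∈ U →
      ∃ y ∈ U, ∃ q : ℕ, 0 < q ∧ ε < dist (g^[q] x) (g^[q] y))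
    (V : Set unitInterval) (hVo : IsOpen V) (hVne : V.Nonempty) (hVc : IsPreconnected V) :
    ∃ t : ℕ, 0 < t ∧ ∃ j : ℕ, mvalid ε j ∧ mcell ε j ⊆ g^[t] '' V := by
  obtain ⟨x, hx⟩ := hVne
  obtain ⟨y, hy, t, ht, hd⟩ := hsen x V hVo hx
  have hgc : Continuous (fun z : unitInterval => ((g^[t] z : unitInterval) : ℝ)) :=
    continuous_subtype_val.comp (hg.iterate t)
  set S : Set ℝ := (fun z : unitInterval => ((g^[t] z : unitInterval) : ℝ)) '' V with hSdef
  have hSc : IsPreconnected S := hVc.image _ hgc.continuousOn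
  have hS01 : S ⊆ Set.Icc 0 1 := by
    rintro _ ⟨z, _, rfl⟩
    exact (g^[t] z).2
  have hu : ((g^[t] x : unitInterval) : ℝ) ∈ S := ⟨x, hx, rfl⟩
  have hvv : ((g^[t] y : unitInterval) : ℝ) ∈ S := ⟨y, hy, rfl⟩
  set u : ℝ := ((g^[t] x : unitInterval) : ℝ)
  set v : ℝ := ((g^[t] y : unitInterval) : ℝ)
  have habs : ε < |u - v| := by
    rw [← Real.dist_eq, ← Subtype.dist_eq]
    exact hd
  have hpS : min u v ∈ S := by
    rcases min_choice u v with hc | hc <;> rw [hc] <;> assumption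
  have hqS : max u v ∈ S := by
    rcases max_choice u v with hc | hc <;> rw [hc] <;> assumption
  set p := min u v
  set q := max u v
  have hpq : ε < q - p := by
    have hmm : q - p = |v - u| := max_sub_min_eq_abs u v
    rw [abs_sub_comm] at hmm
    linarith
  have hIcc : Set.Icc p q ⊆ S := hSc.ordConnected.out hpS hqS
  have hp0 : 0 ≤ p := (hS01 hpS).1
  have hq1 : q ≤ 1 := (hS01 hqS).2
  set j : ℕ := ⌈p * 8 / ε⌉₊ with hjdef
  have hj1 : p ≤ (j : ℝ) * ε / 8 := by
    have hle : p * 8 / ε ≤ (j : ℝ) := Nat.le_ceil _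
    have : p * 8 ≤ (j : ℝ) * ε := (div_le_iff₀ hε).mp hle
    linarith
  have hj2 : (j : ℝ) * ε / 8 + ε / 8 < q := by
    have h2 : (j : ℝ) < p * 8 / ε + 1 := Nat.ceil_lt_add_one (by positivity)
    have h3 : (p * 8 / ε + 1) * ε = p * 8 + ε := by field_simp
    have h4 : (j : ℝ) * ε < p * 8 + ε := by
      have := mul_lt_mul_of_pos_right h2 hε
      linarith
    linarith
  have hvalid : mvalid ε j := le_of_lt (lt_of_lt_of_le hj2 hq1)
  refine ⟨t, ht, j, hvalid, ?_⟩
  intro z hz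
  have hz' : (z : ℝ) ∈ Set.Icc ((j : ℝ) * ε / 8) ((j : ℝ) * ε / 8 + ε / 8) := hz
  have hzS : (z : ℝ) ∈ S := hIcc ⟨hj1.trans hz'.1, hz'.2.trans hj2.le⟩
  obtain ⟨w, hw, hwz⟩ := hzS
  exact ⟨w, hw, Subtype.ext hwz⟩
lemma machine (g : unitInterval → unitInterval) (hg : Continuous g) (ε : ℝ) (hε : 0 < ε)
    (hsen : ∀ x : unitInterval, ∀ U : Set unitInterval, IsOpen U → x ∈ U →
      ∃ y ∈ U, ∃ q : ℕ, 0 < q ∧ ε < dist (g^[q] x) (g^[q] y))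
    (V : Set unitInterval) (hVo : IsOpen V) (hVne : V.Nonempty) (hVc : IsPreconnected V) :
    SyndeticSet {q : ℕ | 0 < q ∧ ∃ x ∈ V, ∃ y ∈ V, ε < dist (g^[q] x) (g^[q] y)} := by
  classical
  have H : ∀ j : ℕ, ∃ t s : ℕ, mvalid ε j →
      0 < t ∧ mvalid ε s ∧ mcell ε s ⊆ g^[t] '' (mint ε j) := by
    intro j
    by_cases hv : mvalid ε j
    · obtain ⟨t, ht, s, hs, hsub⟩ := mkey g hg ε hε hsen (mint ε j) (mint_open ε j)
        (mint_nonempty ε hε j hv) (mint_preconn ε hε j hv)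
      exact ⟨t, s, fun _ => ⟨ht, hs, hsub⟩⟩
    · exact ⟨1, 0, fun hc => absurd hc hv⟩
  choose tf sf hts using H
  obtain ⟨t₀, ht₀, j₀, hj₀, hsub₀⟩ := mkey g hg ε hε hsen V hVo hVne hVc
  set c : ℕ → ℕ := fun k => sf^[k] j₀ with hcdef
  have hc0 : c 0 = j₀ := rfl
  have hcs : ∀ k, c (k + 1) = sf (c k) := fun k => Function.iterate_succ_apply' sf k j₀
  have hcv : ∀ k, mvalid ε (c k) := by
    intro k
    induction k with
    | zero => exact hj₀
    | succ k ih => rw [hcs]; exact (hts (c k) ih).2.1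
  -- the chain of coverings
  have chain : ∀ s k, 1 ≤ k →
      mcell ε (c (s + k)) ⊆ g^[∑ i ∈ Finset.range k, tf (c (s + i))] '' (mint ε (c s)) := by
    intro s k
    induction k with
    | zero => omega
    | succ k ih =>
      intro _
      rcases Nat.eq_zero_or_pos k with rfl | hk
      · have hstep := (hts (c s) (hcv s)).2.2
        rw [Finset.sum_range_one]
        rw [show s + 1 = s + 1 from rfl, hcs s]
        exact hstep
      · have hstep := (hts (c (s + k)) (hcv (s + k))).2.2
        have h1 : mcell ε (c (s + (k + 1))) ⊆ g^[tf (c (s + k))] '' (mint ε (c (s + k))) := by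
          rw [show s + (k + 1) = (s + k) + 1 by omega, hcs (s + k)]
          exact hstep
        have h2 : g^[tf (c (s + k))] '' (mint ε (c (s + k)))
            ⊆ g^[tf (c (s + k))] '' (g^[∑ i ∈ Finset.range k, tf (c (s + i))] '' (mint ε (c s))) :=
          Set.image_mono ((mint_subset_mcell ε _).trans (ih hk))
        have h3 : g^[tf (c (s + k))] '' (g^[∑ i ∈ Finset.range k, tf (c (s + i))] '' (mint ε (c s)))
            = g^[∑ i ∈ Finset.range (k + 1), tf (c (s + i))] '' (mint ε (c s)) := by
          rw [← Set.image_comp, ← Function.iterate_add, Finset.sum_range_succ, Nat.add_comm]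
        exact (h1.trans h2).trans (le_of_eq h3)
  -- pigeonhole
  obtain ⟨a, b, hab, hcab⟩ : ∃ a b : ℕ, a < b ∧ c a = c b := by
    obtain ⟨a, _, b, _, hne, heq⟩ := Finset.exists_ne_map_eq_of_card_lt_of_maps_to
      (s := Finset.range (⌈(8 : ℝ) / ε⌉₊ + 2)) (t := Finset.range (⌈(8 : ℝ) / ε⌉₊ + 1))
      (by simp) (fun k _ => Finset.mem_range.mpr (Nat.lt_succ_of_le (mvalid_le ε hε _ (hcv k))))
    rcases hne.lt_or_gt with hlt | hlt
    · exact ⟨a, b, hlt, heq⟩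
    · exact ⟨b, a, hlt, heq.symm⟩
  set P : ℕ := ∑ i ∈ Finset.range (b - a), tf (c (a + i)) with hPdef
  have hPpos : 0 < P := by
    apply Finset.sum_pos
    · intro i _; exact (hts (c (a + i)) (hcv (a + i))).1
    · exact Finset.nonempty_range_iff.mpr (by omega)
  have hcycle : mcell ε (c a) ⊆ g^[P] '' (mint ε (c a)) := by
    have hch := chain a (b - a) (by omega)
    rw [Nat.add_sub_cancel' hab.le] at hch
    rwa [← hcab] at hch
  have hiterate : ∀ t : ℕ, mint ε (c a) ⊆ g^[P * t] '' (mint ε (c a)) := by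
    intro t
    induction t with
    | zero => simp
    | succ t ih =>
      have h1 : mint ε (c a) ⊆ g^[P] '' (mint ε (c a)) :=
        (mint_subset_mcell ε _).trans hcycle
      have h2 : g^[P * t] '' (mint ε (c a)) ⊆ g^[P * t] '' (g^[P] '' (mint ε (c a))) :=
        Set.image_mono h1
      have h3 : g^[P * t] '' (g^[P] '' (mint ε (c a))) = g^[P * (t + 1)] '' (mint ε (c a)) := by
        rw [← Set.image_comp, ← Function.iterate_add, show P * t + P = P * (t + 1) by ring]
      exact (ih.trans h2).trans (le_of_eq h3)
  -- entry from V
  obtain ⟨N₁, hN₁⟩ : ∃ N₁ : ℕ, mcell ε (c a) ⊆ g^[N₁] '' V := by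
    rcases Nat.eq_zero_or_pos a with rfl | hapos
    · exact ⟨t₀, hsub₀⟩
    · refine ⟨(∑ i ∈ Finset.range a, tf (c (0 + i))) + t₀, ?_⟩
      have h1 := chain 0 a (by omega)
      rw [Nat.zero_add] at h1
      have h2 : g^[∑ i ∈ Finset.range a, tf (c (0 + i))] '' (mint ε (c 0))
          ⊆ g^[∑ i ∈ Finset.range a, tf (c (0 + i))] '' (g^[t₀] '' V) := by
        apply Set.image_mono
        exact (mint_subset_mcell ε _).trans (by rw [hc0]; exact hsub₀)
      have h3 : g^[∑ i ∈ Finset.range a, tf (c (0 + i))] '' (g^[t₀] '' V)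
          = g^[(∑ i ∈ Finset.range a, tf (c (0 + i))) + t₀] '' V := by
        rw [← Set.image_comp, ← Function.iterate_add]
      exact (h1.trans h2).trans (le_of_eq h3)
  -- inner sensitivity
  obtain ⟨x₀, hx₀⟩ := mint_nonempty ε hε (c a) (hcv a)
  obtain ⟨y₀, hy₀, q₀, hq₀, hdist⟩ := hsen x₀ (mint ε (c a)) (mint_open ε _) hx₀
  -- syndeticity
  refine ⟨N₁ + q₀ + P, ?_⟩
  intro i
  have hex : ∃ t : ℕ, i ≤ N₁ + q₀ + P * t :=
    ⟨i, le_trans (Nat.le_mul_of_pos_left i hPpos) (by omega)⟩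
  set t := Nat.find hex with htdef
  have htsp : i ≤ N₁ + q₀ + P * t := Nat.find_spec hex
  have hupper : N₁ + q₀ + P * t ≤ i + (N₁ + q₀ + P) := by
    rcases Nat.eq_zero_or_pos t with h0 | hpos
    · rw [h0, Nat.mul_zero]; omega
    · have hmin : ¬ i ≤ N₁ + q₀ + P * (t - 1) := Nat.find_min hex (by omega)
      push_neg at hmin
      have hPt : P * t = P * (t - 1) + P := by
        conv_lhs => rw [show t = (t - 1) + 1 by omega]
        ring
      omega
  have hmem : ∀ z₀ : unitInterval, z₀ ∈ mint ε (c a) → z₀ ∈ g^[N₁ + P * t] '' V := by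
    intro z₀ hz₀
    have h1 : z₀ ∈ g^[P * t] '' (mint ε (c a)) := hiterate t hz₀
    have h2 : g^[P * t] '' (mint ε (c a)) ⊆ g^[P * t] '' (g^[N₁] '' V) :=
      Set.image_mono ((mint_subset_mcell ε _).trans hN₁)
    have h3 : z₀ ∈ g^[P * t] '' (g^[N₁] '' V) := h2 h1
    rw [← Set.image_comp, ← Function.iterate_add, show P * t + N₁ = N₁ + P * t by omega] at h3
    exact h3
  obtain ⟨u, hu, hux⟩ := hmem x₀ hx₀
  obtain ⟨v, hv, hvy⟩ := hmem y₀ hy₀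
  refine ⟨N₁ + q₀ + P * t, htsp, hupper, ?_⟩
  have hgu : g^[N₁ + q₀ + P * t] u = g^[q₀] x₀ := by
    rw [show N₁ + q₀ + P * t = q₀ + (N₁ + P * t) by omega, Function.iterate_add_apply, hux]
  have hgv : g^[N₁ + q₀ + P * t] v = g^[q₀] y₀ := by
    rw [show N₁ + q₀ + P * t = q₀ + (N₁ + P * t) by omega, Function.iterate_add_apply, hvy]
  refine ⟨by omega, u, hu, v, hv, ?_⟩
  rw [hgu, hgv]
  exact hdist
/-- an `m`-periodic sensitive non-autonomous system on `[0,1]` is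
syndetically sensitive. -/
theorem periodic_interval_sensitive_implies_syndetically_sensitive
    (f : ℕ → unitInterval → unitInterval) (hf : ∀ n, Continuous (f n)) (m : ℕ)
    (hm : 0 < m) (hper : ∀ n, f (n + m) = f n) (h : NASensitive f) :
    ∃ δ : ℝ, 0 < δ ∧ ∀ U : Set unitInterval, IsOpen U → U.Nonempty →
      SyndeticSet (NSet f U δ) := by
  obtain ⟨ε, hε, hgs⟩ := aux_g_sens f hf m hm hper h
  refine ⟨ε, hε, ?_⟩
  intro U hU hUne
  -- find a preconnected open nonempty subset of U
  obtain ⟨x, hx⟩ := hUne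
  obtain ⟨tR, htR, htRU⟩ := isOpen_induced_iff.mp hU
  have hxT : (x : ℝ) ∈ tR := by
    rw [← htRU] at hx
    exact hx
  obtain ⟨r, hr, hball⟩ := Metric.isOpen_iff.mp htR _ hxT
  set V : Set unitInterval := Subtype.val ⁻¹' Set.Ioo ((x : ℝ) - r) ((x : ℝ) + r) with hVdef
  have hVU : V ⊆ U := by
    rw [← htRU]
    apply Set.preimage_mono
    rw [← Real.ball_eq_Ioo]
    exact hball
  have hVo : IsOpen V := isOpen_Ioo.preimage continuous_subtype_val
  have hVne : V.Nonempty := ⟨x, ⟨by linarith, by linarith⟩⟩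
  have hVc : IsPreconnected V := by
    rw [← Topology.IsInducing.subtypeVal.isPreconnected_image]
    rw [hVdef, Subtype.image_preimage_coe]
    exact (Set.ordConnected_Icc.inter Set.ordConnected_Ioo).isPreconnected
  have hsyn := machine (iterN f m) (aux_iterN_cont f hf m) ε hε hgs V hVo hVne hVc
  obtain ⟨A, hA⟩ := hsyn
  refine ⟨m * (A + 1), ?_⟩
  intro i
  obtain ⟨q, hq1, hq2, hq3⟩ := hA (i / m + 1)
  obtain ⟨hqpos, xx, hxx, yy, hyy, hdd⟩ := hq3
  have hdiv : m * (i / m) + i % m = i := Nat.div_add_mod i m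
  have hmod : i % m < m := Nat.mod_lt i hm
  have hmul1 : m * (i / m + 1) ≤ m * q := Nat.mul_le_mul_left m hq1
  have hmul2 : m * q ≤ m * (i / m + 1 + A) := Nat.mul_le_mul_left m hq2
  have he1 : m * (i / m + 1) = m * (i / m) + m := by ring
  have he2 : m * (i / m + 1 + A) = m * (i / m) + m + m * A := by ring
  have he3 : m * (A + 1) = m * A + m := by ring
  refine ⟨m * q, by omega, by omega, ?_⟩
  refine ⟨by positivity, xx, hVU hxx, yy, hVU hyy, ?_⟩
  rw [aux_iterN_mul f m hper q xx, aux_iterN_mul f m hper q yy]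
  exact hdd
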